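/- (M. Brancheva) The sum of the lengths of the sides of a Diophantine triangle is always even: if A, B, C are points of ℤ × ℤ and a, b, c are nonnegative integers with a² = (B₁ − C₁)² + (B₂ − C₂)², b² = (A₁ − C₁)² + (A₂ − C₂)² and c² = (A₁ − B₁)² + (A₂ − B₂)², then a + b + c is even. -/
import Mathlib

/-- M. Brancheva: the sum of the side lengths of a
Diophantine triangle is even. -/
theorem diophantine_triangle_perimeter_even (A B C : ℤ × ℤ) (a b c : ℕ)
    (ha : (a : ℤ) ^ 2 = (B.1 - C.1) ^ 2 + (B.2 - C.2) ^ 2)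
    (hb : (b : ℤ) ^ 2 = (A.1 - C.1) ^ 2 + (A.2 - C.2) ^ 2)
    (hc : (c : ℤ) ^ 2 = (A.1 - B.1) ^ 2 + (A.2 - B.2) ^ 2) :
    Even (a + b + c) := by
  have key : ∀ x : ZMod 2, x ^ 2 = x := by decide
  have h2 : (2 : ZMod 2) = 0 := rfl
  have ha' := congrArg (Int.cast : ℤ → ZMod 2) ha
  have hb' := congrArg (Int.cast : ℤ → ZMod 2) hb
  have hc' := congrArg (Int.cast : ℤ → ZMod 2) hc
  push_cast at ha' hb' hc'
  simp only [key] at ha' hb' hc'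
  have hsum : ((a + b + c : ℕ) : ZMod 2) = 0 := by
    push_cast
    rw [ha', hb', hc']
    linear_combination ((A.1 : ZMod 2) + A.2 - C.1 - C.2) * h2
  have := (ZMod.natCast_eq_zero_iff (a + b + c) 2).mp hsum
  exact even_iff_two_dvd.mpr this
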